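/- Let (⋯ → G₂ → G₁ → G₀) be an inverse sequence of pointed sets satisfying the Mittag-Leffler condition whose inverse limit lim Gᵢ consists only of the basepoint thread. Then for each i there exists j > i such that the composite bonding map G_j → G_i is trivial, i.e. its image is the basepoint of G_i. -/
import Mathlib


/-- An inverse sequence of pointed sets `⋯ → X₂ → X₁ → X₀`, presented by its
compatible composite basepoint-preserving bonding maps `bond h : X j → X i` for
`i ≤ j`; the one-step bonding maps are `bond (Nat.le_succ i) : X (i+1) → X i`. -/
structure PointedInvSeq (X : ℕ → Type) (pt : ∀ i, X i) : Type where
  bond : ∀ ⦃i j : ℕ⦄, i ≤ j → X j → X i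
  bond_refl : ∀ i (x : X i), bond (le_refl i) x = x
  bond_comp : ∀ ⦃i j k : ℕ⦄ (hij : i ≤ j) (hjk : j ≤ k) (x : X k),
    bond (hij.trans hjk) x = bond hij (bond hjk x)
  bond_pt : ∀ ⦃i j : ℕ⦄ (h : i ≤ j), bond h (pt j) = pt i

namespace PointedInvSeq

variable {X : ℕ → Type} {pt : ∀ i, X i}

/-- The Mittag-Leffler condition: for each `i` there is `j > i` such that for all
`k > j` the image of `X k → X i` equals the image of `X j → X i`. -/
def MittagLeffler (S : PointedInvSeq X pt) : Prop :=
  ∀ i, ∃ j, ∃ hij : i < j, ∀ k, ∀ hjk : j < k,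
    Set.range (S.bond (hij.le.trans hjk.le)) = Set.range (S.bond hij.le)

end PointedInvSeq

namespace PointedInvSeq

variable {X : ℕ → Type} {pt : ∀ i, X i}

/-- The stable image at level `n`: elements hit from every higher level. -/
def stable (S : PointedInvSeq X pt) (n : ℕ) : Set (X n) :=
  {a | ∀ k (h : n ≤ k), a ∈ Set.range (S.bond h)}

theorem mem_stable (S : PointedInvSeq X pt) {n j : ℕ} (hnj : n < j)
    (hj : ∀ k (hjk : j < k),
      Set.range (S.bond (hnj.le.trans hjk.le)) = Set.range (S.bond hnj.le))
    (y : X j) : S.bond hnj.le y ∈ S.stable n := by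
  intro k hk
  rcases le_or_gt k j with hkj | hjk
  · exact ⟨S.bond hkj y, (S.bond_comp hk hkj y).symm⟩
  · show S.bond hnj.le y ∈ Set.range (S.bond (hnj.le.trans hjk.le))
    rw [hj k hjk]
    exact ⟨y, rfl⟩

theorem stable_step (S : PointedInvSeq X pt) (hML : S.MittagLeffler) (n : ℕ)
    {a : X n} (ha : a ∈ S.stable n) :
    ∃ b ∈ S.stable (n + 1), S.bond (Nat.le_succ n) b = a := by
  obtain ⟨j, hnj, hj⟩ := hML (n + 1)
  obtain ⟨y, hy⟩ := ha j ((Nat.le_succ n).trans hnj.le)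
  refine ⟨S.bond hnj.le y, S.mem_stable hnj hj y, ?_⟩
  rw [← S.bond_comp (Nat.le_succ n) hnj.le y]
  exact hy

noncomputable def lift (S : PointedInvSeq X pt) (hML : S.MittagLeffler) (i : ℕ)
    (a : X i) (ha : a ∈ S.stable i) : ∀ n, {b : X (i + n) // b ∈ S.stable (i + n)}
  | 0 => ⟨a, ha⟩
  | n + 1 => ⟨(S.stable_step hML (i + n) (S.lift hML i a ha n).2).choose,
      (S.stable_step hML (i + n) (S.lift hML i a ha n).2).choose_spec.1⟩

theorem lift_succ (S : PointedInvSeq X pt) (hML : S.MittagLeffler) (i : ℕ)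
    (a : X i) (ha : a ∈ S.stable i) (n : ℕ) :
    S.bond (Nat.le_succ (i + n)) (S.lift hML i a ha (n + 1)).1
      = (S.lift hML i a ha n).1 :=
  (S.stable_step hML (i + n) (S.lift hML i a ha n).2).choose_spec.2

theorem lift_bond (S : PointedInvSeq X pt) (hML : S.MittagLeffler) (i : ℕ)
    (a : X i) (ha : a ∈ S.stable i) (n : ℕ) :
    S.bond (Nat.le_add_right i n) (S.lift hML i a ha n).1 = a := by
  induction n with
  | zero => exact S.bond_refl i a
  | succ n ih =>
    have h1 := S.bond_comp (Nat.le_add_right i n) (Nat.le_succ (i + n))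
      (S.lift hML i a ha (n + 1)).1
    rw [S.lift_succ hML i a ha n] at h1
    calc S.bond (Nat.le_add_right i (n + 1)) (S.lift hML i a ha (n + 1)).1
        = S.bond (Nat.le_add_right i n) (S.lift hML i a ha n).1 := h1
      _ = a := ih

end PointedInvSeq

/-- If an inverse sequence of pointed sets satisfies the Mittag-Leffler condition
and its inverse limit consists only of the basepoint thread, then for each `i`
there exists `j > i` such that the composite bonding map `X j → X i` is trivial. -/
theorem exists_trivial_bond_of_mittagLeffler_of_lim_trivial
    {X : ℕ → Type} (pt : ∀ i, X i) (S : PointedInvSeq X pt)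
    (hML : S.MittagLeffler)
    (hlim : ∀ g : ∀ i, X i,
      (∀ i, S.bond (Nat.le_succ i) (g (i + 1)) = g i) → ∀ i, g i = pt i) :
    ∀ i, ∃ j, ∃ hij : i < j, ∀ x : X j, S.bond hij.le x = pt i := by

  intro i
  obtain ⟨j, hij, hj⟩ := hML i
  refine ⟨j, hij, fun x => ?_⟩
  set a := S.bond hij.le x with hadef
  have ha : a ∈ S.stable i := S.mem_stable hij hj x
  let f := S.lift hML i a ha
  let g : ∀ m, X m := fun m => S.bond (Nat.le_add_left m i) (f m).1
  have hcompat : ∀ m, S.bond (Nat.le_succ m) (g (m + 1)) = g m := by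
    intro m
    have h1 := S.bond_comp (Nat.le_succ m) (Nat.le_add_left (m + 1) i) (f (m + 1)).1
    have h2 := S.bond_comp (Nat.le_add_left m i) (Nat.le_succ (i + m)) (f (m + 1)).1
    rw [S.lift_succ hML i a ha m] at h2
    exact h1.symm.trans h2
  have hgi : g i = pt i := hlim g hcompat i
  exact (S.lift_bond hML i a ha i).symm.trans hgi
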